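/- Let p(z) = 1 + c₁z + c₂z² + ⋯ be analytic on the unit disc with Re(p(z)) > 0, and let 0 < v ≤ 1/2. Then |c₂ - v c₁²| + v|c₁|² ≤ 2. -/

import Mathlib

open Metric

lemma mob_lt (a w : ℂ) (ha : ‖a‖ < 1) (hw : ‖w‖ < 1) :
    ‖w - a‖ < ‖1 - (starRingEnd ℂ) a * w‖ := by
  have ha' : Complex.normSq a < 1 := by rw [← Complex.sq_norm]; nlinarith [norm_nonneg a]
  have hw' : Complex.normSq w < 1 := by rw [← Complex.sq_norm]; nlinarith [norm_nonneg w]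
  rw [Complex.norm_def, Complex.norm_def]
  apply Real.sqrt_lt_sqrt (Complex.normSq_nonneg _)
  simp only [Complex.normSq_apply, Complex.sub_re, Complex.sub_im, Complex.mul_re, Complex.mul_im,
    Complex.one_re, Complex.one_im, Complex.conj_re, Complex.conj_im] at *
  nlinarith [sq_nonneg (a.re - w.re), sq_nonneg (a.im - w.im)]

lemma schwarz_pick (g : ℂ → ℂ) (hgd : DifferentiableOn ℂ g (ball 0 1))
    (hg : ∀ z ∈ ball (0:ℂ) 1, ‖g z‖ ≤ 1) :
    ‖deriv g 0‖ ≤ 1 - ‖g 0‖ ^ 2 := by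
  have h0 : (0:ℂ) ∈ ball (0:ℂ) 1 := mem_ball_self one_pos
  by_cases hcase : ∀ z ∈ ball (0:ℂ) 1, ‖g z‖ < 1
  · set a := g 0 with ha
    have haa : ‖a‖ < 1 := hcase 0 h0
    have hden : ∀ z ∈ ball (0:ℂ) 1, (1:ℂ) - (starRingEnd ℂ) a * g z ≠ 0 := by
      intro z hz h
      have h1 : ‖(starRingEnd ℂ) a * g z‖ < 1 := by
        rw [norm_mul, Complex.norm_conj]
        nlinarith [norm_nonneg a, norm_nonneg (g z), hcase z hz]
      rw [← sub_eq_zero.mp h] at h1; simp at h1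
    set h := fun z => (g z - a)/(1 - (starRingEnd ℂ) a * g z) with hh
    have hhd : DifferentiableOn ℂ h (ball 0 1) :=
      (hgd.sub_const a).div ((differentiableOn_const 1).sub (hgd.const_mul _)) hden
    have hh0 : h 0 = 0 := by simp [hh, ha]
    have hmaps : Set.MapsTo h (ball 0 1) (ball (h 0) 1) := by
      rw [hh0]
      intro z hz
      rw [mem_ball_zero_iff]
      show ‖(g z - a)/(1 - (starRingEnd ℂ) a * g z)‖ < 1
      rw [norm_div, div_lt_one (norm_pos_iff.mpr (hden z hz))]
      exact mob_lt a (g z) haa (hcase z hz)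
    have hsch := Complex.norm_deriv_le_div_of_mapsTo_ball hhd (hmaps.mono_right ball_subset_closedBall) one_pos
    have hga : DifferentiableAt ℂ g 0 := hgd.differentiableAt (isOpen_ball.mem_nhds h0)
    have hdh : deriv h 0 = deriv g 0 / (1 - (starRingEnd ℂ) a * a) := by
      rw [hh, deriv_fun_div (hga.sub_const a)
        ((differentiableAt_const 1).fun_sub (hga.const_mul _)) (hden 0 h0)]
      rw [deriv_sub_const, deriv_const_sub, deriv_const_mul _ hga]
      have hd0 := hden 0 h0
      rw [← ha] at hd0 ⊢
      field_simp
      ring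
    have hne0 : (1:ℂ) - (starRingEnd ℂ) a * a ≠ 0 := by
      have := hden 0 h0; rwa [← ha] at this
    rw [hdh, norm_div, one_div_one, div_le_one (norm_pos_iff.mpr hne0)] at hsch
    have habs : ‖1 - (starRingEnd ℂ) a * a‖ = 1 - ‖a‖ ^ 2 := by
      have : (starRingEnd ℂ) a * a = ((Complex.normSq a : ℝ) : ℂ) := by
        rw [mul_comm, Complex.mul_conj]
      rw [this, ← Complex.ofReal_one, ← Complex.ofReal_sub, Complex.norm_real, Real.norm_eq_abs,
        abs_of_nonneg (by nlinarith [Complex.sq_norm a, norm_nonneg a, haa]), Complex.sq_norm]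
    rw [← habs]; exact hsch
  · push_neg at hcase
    obtain ⟨z₀, hz₀, hz₀1⟩ := hcase
    have heq : ‖g z₀‖ = 1 := le_antisymm (hg z₀ hz₀) hz₀1
    have hmax : IsMaxOn (norm ∘ g) (ball 0 1) z₀ := by
      intro x hx
      simp only [Function.comp_apply, Set.mem_setOf_eq, heq]
      exact hg x hx
    have hconst := Complex.eqOn_of_isPreconnected_of_isMaxOn_norm
      (convex_ball (0:ℂ) 1).isPreconnected isOpen_ball hgd hz₀ hmax
    have hd0 : deriv g 0 = 0 := by
      have hev : g =ᶠ[nhds (0:ℂ)] fun _ => g z₀ :=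
        Filter.eventuallyEq_of_mem (isOpen_ball.mem_nhds h0) (fun x hx => hconst hx)
      rw [hev.deriv_eq, deriv_const]
    rw [hd0, norm_zero]
    nlinarith [hg 0 h0, norm_nonneg (g 0)]

lemma cayley_lt (w : ℂ) (hw : 0 < w.re) : ‖w - 1‖ < ‖w + 1‖ := by
  rw [Complex.norm_def, Complex.norm_def]
  apply Real.sqrt_lt_sqrt (Complex.normSq_nonneg _)
  simp only [Complex.normSq_apply, Complex.sub_re, Complex.sub_im, Complex.add_re,
    Complex.add_im, Complex.one_re, Complex.one_im]
  nlinarith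

lemma caratheodory_c2 (P : ℂ → ℂ) (hPd : DifferentiableOn ℂ P (ball 0 1)) (hP0 : P 0 = 1)
    (hre : ∀ z ∈ ball (0:ℂ) 1, 0 < (P z).re) :
    ‖iteratedDeriv 2 P 0 / 2 - (deriv P 0) ^ 2 / 2‖
      ≤ 2 - (‖deriv P 0‖) ^ 2 / 2 := by
  have hOp : IsOpen (ball (0:ℂ) 1) := isOpen_ball
  have h0 : (0:ℂ) ∈ ball (0:ℂ) 1 := mem_ball_self one_pos
  have hne : ∀ z ∈ ball (0:ℂ) 1, P z + 1 ≠ 0 := by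
    intro z hz h
    have h1 := hre z hz
    have h2 : (P z + 1).re = (P z).re + 1 := by simp
    rw [h] at h2; simp at h2; linarith
  set ω : ℂ → ℂ := fun z => (P z - 1) / (P z + 1) with hω
  have hωd : DifferentiableOn ℂ ω (ball 0 1) :=
    (hPd.sub_const 1).div (hPd.add_const 1) hne
  have hω0 : ω 0 = 0 := by simp [hω, hP0]
  have hωmaps : Set.MapsTo ω (ball 0 1) (ball (ω 0) 1) := by
    rw [hω0]
    intro z hz
    rw [mem_ball_zero_iff]
    show ‖(P z - 1) / (P z + 1)‖ < 1
    rw [norm_div, div_lt_one (norm_pos_iff.mpr (hne z hz))]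
    exact cayley_lt (P z) (hre z hz)
  set g : ℂ → ℂ := dslope ω 0 with hg
  have hgd : DifferentiableOn ℂ g (ball 0 1) :=
    (Complex.differentiableOn_dslope (hOp.mem_nhds h0)).mpr hωd
  have hg1 : ∀ z ∈ ball (0:ℂ) 1, ‖g z‖ ≤ 1 := by
    intro z hz
    simpa using Complex.norm_dslope_le_div_of_mapsTo_ball hωd (hωmaps.mono_right ball_subset_closedBall) hz
  have hPa : DifferentiableAt ℂ P 0 := hPd.differentiableAt (hOp.mem_nhds h0)
  have hAnal : AnalyticOnNhd ℂ P (ball 0 1) := hPd.analyticOnNhd hOp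
  have hdPd : DifferentiableAt ℂ (deriv P) 0 := (hAnal.deriv 0 h0).differentiableAt
  have ha : deriv ω 0 = deriv P 0 / 2 := by
    rw [hω, deriv_fun_div (hPa.sub_const 1) (hPa.add_const 1) (hne 0 h0),
      deriv_sub_const, deriv_add_const, hP0]
    ring
  have hω' : ∀ z ∈ ball (0:ℂ) 1, deriv ω z = 2 * deriv P z / (P z + 1) ^ 2 := by
    intro z hz
    have hPz : DifferentiableAt ℂ P z := hPd.differentiableAt (hOp.mem_nhds hz)
    rw [hω, deriv_fun_div (hPz.sub_const 1) (hPz.add_const 1) (hne z hz),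
      deriv_sub_const, deriv_add_const]
    congr 1
    ring
  have hev : deriv ω =ᶠ[nhds (0:ℂ)] fun z => 2 * deriv P z / (P z + 1) ^ 2 :=
    Filter.eventuallyEq_of_mem (hOp.mem_nhds h0) hω'
  have hω'' : deriv (deriv ω) 0 = iteratedDeriv 2 P 0 / 2 - (deriv P 0) ^ 2 / 2 := by
    rw [hev.deriv_eq]
    have hden2 : ((P 0 + 1) ^ 2 : ℂ) ≠ 0 := pow_ne_zero _ (hne 0 h0)
    rw [deriv_fun_div (hdPd.const_mul 2) ((hPa.add_const 1).fun_pow 2) hden2,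
      deriv_const_mul _ hdPd]
    have hdpow : deriv (fun z => (P z + 1) ^ 2) 0 = 2 * (P 0 + 1) * deriv P 0 := by
      rw [deriv_fun_pow (hPa.add_const 1) 2, deriv_add_const]
      norm_num
    have h2d : iteratedDeriv 2 P 0 = deriv (deriv P) 0 := by
      rw [iteratedDeriv_succ, iteratedDeriv_one]
    rw [hdpow, hP0, h2d]
    have : ((1:ℂ) + 1) ≠ 0 := by norm_num
    field_simp
    ring
  have hωg : ω = fun z => z * g z := by
    funext z
    have h := sub_smul_dslope ω 0 z
    rw [sub_zero, smul_eq_mul, hω0, sub_zero, ← hg] at h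
    exact h.symm
  have hgA : AnalyticOnNhd ℂ g (ball 0 1) := hgd.analyticOnNhd hOp
  have hdgd : DifferentiableAt ℂ (deriv g) 0 := (hgA.deriv 0 h0).differentiableAt
  have hga : DifferentiableAt ℂ g 0 := hgd.differentiableAt (hOp.mem_nhds h0)
  have hωd1 : ∀ z ∈ ball (0:ℂ) 1, deriv ω z = g z + z * deriv g z := by
    intro z hz
    have hgz : DifferentiableAt ℂ g z := hgd.differentiableAt (hOp.mem_nhds hz)
    rw [hωg, deriv_fun_mul differentiableAt_fun_id hgz, deriv_id'', one_mul]
  have h2b : deriv (deriv ω) 0 = 2 * deriv g 0 := by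
    have hev2 : deriv ω =ᶠ[nhds (0:ℂ)] fun z => g z + z * deriv g z :=
      Filter.eventuallyEq_of_mem (hOp.mem_nhds h0) hωd1
    rw [hev2.deriv_eq, deriv_fun_add hga (differentiableAt_fun_id.fun_mul hdgd),
      deriv_fun_mul differentiableAt_fun_id hdgd, deriv_id'']
    ring
  have hsp := schwarz_pick g hgd hg1
  have hg0 : g 0 = deriv P 0 / 2 := by rw [hg, dslope_same, ha]
  have hdg0 : deriv g 0 = (iteratedDeriv 2 P 0 / 2 - (deriv P 0) ^ 2 / 2) / 2 := by
    have h := hω''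
    rw [h2b] at h
    linear_combination h / 2
  rw [hdg0, hg0, norm_div, norm_div, Complex.norm_two] at hsp
  have hA := norm_nonneg (iteratedDeriv 2 P 0 / 2 - (deriv P 0) ^ 2 / 2)
  nlinarith [hsp]

theorem ma_minda_refined_left (P : ℂ → ℂ) (hP : AnalyticOn ℂ P (ball 0 1))
    (hP0 : P 0 = 1) (hre : ∀ z ∈ ball (0 : ℂ) 1, 0 < (P z).re)
    (c₁ c₂ : ℂ) (hc₁ : c₁ = deriv P 0) (hc₂ : c₂ = iteratedDeriv 2 P 0 / 2)
    (v : ℝ) (hv0 : 0 < v) (hv : v ≤ 1 / 2) :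
    ‖c₂ - (v : ℂ) * c₁ ^ 2‖ + v * (‖c₁‖) ^ 2 ≤ 2 := by
  have key := caratheodory_c2 P hP.differentiableOn hP0 hre
  rw [← hc₁, ← hc₂] at key
  have htri : ‖c₂ - (v : ℂ) * c₁ ^ 2‖
      ≤ ‖c₂ - c₁ ^ 2 / 2‖ + ‖((1/2 - v : ℝ) : ℂ) * c₁ ^ 2‖ := by
    have h : c₂ - (v : ℂ) * c₁ ^ 2 = (c₂ - c₁ ^ 2 / 2) + ((1/2 - v : ℝ) : ℂ) * c₁ ^ 2 := by
      push_cast; ring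
    rw [h]
    exact norm_add_le _ _
  have habs2 : ‖((1/2 - v : ℝ) : ℂ) * c₁ ^ 2‖
      = (1/2 - v) * ‖c₁‖ ^ 2 := by
    rw [norm_mul, Complex.norm_real, Real.norm_eq_abs, abs_of_nonneg (by linarith), norm_pow]
  linarith
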